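/- arXiv:1308.6678 — 2 statements merged into one kernel-verified Lean document; each statement's English description precedes it below -/
import Mathlib

section
/- A graph G is the line graph of a triangle-free graph if and only if G contains no claw and no diamond as induced subgraphs. -/
open SimpleGraph

/-- The claw `K_{1,3}`. -/
def clawGraph : SimpleGraph (Fin 1 ⊕ Fin 3) := completeBipartiteGraph (Fin 1) (Fin 3)

/-- The diamond: `K₄` minus one edge. -/
def diamondGraph : SimpleGraph (Fin 4) where
  Adj x y := x ≠ y ∧ ¬ (x = 0 ∧ y = 1) ∧ ¬ (x = 1 ∧ y = 0)
  symm := by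
    refine ⟨?_⟩
    rintro x y ⟨h1, h2, h3⟩
    exact ⟨h1.symm, fun ⟨a, b⟩ => h3 ⟨b, a⟩, fun ⟨a, b⟩ => h2 ⟨b, a⟩⟩
  loopless := by
    refine ⟨?_⟩
    rintro x ⟨h, -, -⟩
    exact h rfl

instance : DecidableRel diamondGraph.Adj := fun x y =>
  decidable_of_iff (x ≠ y ∧ ¬ (x = 0 ∧ y = 1) ∧ ¬ (x = 1 ∧ y = 0)) Iff.rfl

namespace LGAux

variable {V : Type u} {W : Type v}

/-! ### Easy direction: line graphs of triangle-free graphs are claw- and diamond-free -/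

lemma lineGraph_clawFree (H : SimpleGraph W) : IsEmpty (clawGraph ↪g H.lineGraph) := by
  constructor
  intro f
  -- the center and leaves
  set e : H.edgeSet := f (Sum.inl 0) with he
  obtain ⟨⟨a, b⟩, hab⟩ : ∃ p : W × W, (e : Sym2 W) = s(p.1, p.2) := by
    induction (e : Sym2 W) using Sym2.ind with
    | _ x y => exact ⟨(x, y), rfl⟩
  have hadj : ∀ i : Fin 3, H.lineGraph.Adj e (f (Sum.inr i)) := by
    intro i
    refine f.map_adj_iff.mpr ?_
    simp [clawGraph]
  have hmem : ∀ i : Fin 3, a ∈ (f (Sum.inr i) : Sym2 W) ∨ b ∈ (f (Sum.inr i) : Sym2 W) := by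
    intro i
    obtain ⟨-, x, hx1, hx2⟩ := lineGraph_adj_iff_exists.mp (hadj i)
    rw [hab, Sym2.mem_iff] at hx1
    rcases hx1 with rfl | rfl
    · exact Or.inl hx2
    · exact Or.inr hx2
  have key : ∀ i j : Fin 3, i ≠ j →
      ¬ (∃ x, x ∈ (f (Sum.inr i) : Sym2 W) ∧ x ∈ (f (Sum.inr j) : Sym2 W)) := by
    intro i j hij ⟨x, hx1, hx2⟩
    have hne : f (Sum.inr i) ≠ f (Sum.inr j) := f.injective.ne (by simpa using hij)
    have : H.lineGraph.Adj (f (Sum.inr i)) (f (Sum.inr j)) :=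
      lineGraph_adj_iff_exists.mpr ⟨hne, x, hx1, hx2⟩
    have := f.map_adj_iff.mp this
    simp [clawGraph] at this
  rcases hmem 0 with h0 | h0 <;> rcases hmem 1 with h1 | h1 <;> rcases hmem 2 with h2 | h2
  · exact key 0 1 (by decide) ⟨a, h0, h1⟩
  · exact key 0 1 (by decide) ⟨a, h0, h1⟩
  · exact key 0 2 (by decide) ⟨a, h0, h2⟩
  · exact key 1 2 (by decide) ⟨b, h1, h2⟩
  · exact key 1 2 (by decide) ⟨a, h1, h2⟩
  · exact key 0 2 (by decide) ⟨b, h0, h2⟩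
  · exact key 0 1 (by decide) ⟨b, h0, h1⟩
  · exact key 0 1 (by decide) ⟨b, h0, h1⟩

/-- In the line graph of a triangle-free graph, three pairwise adjacent edges share a vertex. -/
lemma common_vertex {H : SimpleGraph W} (hH : H.CliqueFree 3) {e f g : H.edgeSet}
    (hef : H.lineGraph.Adj e f) (heg : H.lineGraph.Adj e g) (hfg : H.lineGraph.Adj f g) :
    ∃ x, x ∈ (e : Sym2 W) ∧ x ∈ (f : Sym2 W) ∧ x ∈ (g : Sym2 W) := by
  classical
  obtain ⟨-, a, ha1, ha2⟩ := lineGraph_adj_iff_exists.mp hef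
  obtain ⟨-, b, hb1, hb2⟩ := lineGraph_adj_iff_exists.mp heg
  obtain ⟨-, c, hc1, hc2⟩ := lineGraph_adj_iff_exists.mp hfg
  by_cases hab : a = b
  · exact ⟨a, ha1, ha2, hab ▸ hb2⟩
  by_cases hac : a = c
  · exact ⟨a, ha1, ha2, hac ▸ hc2⟩
  by_cases hbc : b = c
  · exact ⟨b, hb1, hbc ▸ hc1, hb2⟩
  exfalso
  have hE : (e : Sym2 W) = s(a, b) := (Sym2.mem_and_mem_iff hab).mp ⟨ha1, hb1⟩
  have hF : (f : Sym2 W) = s(a, c) := (Sym2.mem_and_mem_iff hac).mp ⟨ha2, hc1⟩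
  have hG : (g : Sym2 W) = s(b, c) := (Sym2.mem_and_mem_iff hbc).mp ⟨hb2, hc2⟩
  have hAB : H.Adj a b := H.mem_edgeSet.mp (hE ▸ e.2)
  have hAC : H.Adj a c := H.mem_edgeSet.mp (hF ▸ f.2)
  have hBC : H.Adj b c := H.mem_edgeSet.mp (hG ▸ g.2)
  exact hH {a, b, c} (is3Clique_triple_iff.mpr ⟨hAB, hAC, hBC⟩)

lemma lineGraph_diamondFree {H : SimpleGraph W} (hH : H.CliqueFree 3) :
    IsEmpty (diamondGraph ↪g H.lineGraph) := by
  constructor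
  intro f
  have hadj : ∀ i j : Fin 4, diamondGraph.Adj i j → H.lineGraph.Adj (f i) (f j) :=
    fun i j h => f.map_adj_iff.mpr h
  obtain ⟨v, hv0, hv2, hv3⟩ := common_vertex hH (hadj 0 2 (by decide))
    (hadj 0 3 (by decide)) (hadj 2 3 (by decide))
  obtain ⟨w, hw1, hw2, hw3⟩ := common_vertex hH (hadj 1 2 (by decide))
    (hadj 1 3 (by decide)) (hadj 2 3 (by decide))
  by_cases hvw : v = w
  · have hne : f 0 ≠ f 1 := f.injective.ne (by decide)
    have : H.lineGraph.Adj (f 0) (f 1) :=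
      lineGraph_adj_iff_exists.mpr ⟨hne, v, hv0, hvw ▸ hw1⟩
    have := f.map_adj_iff.mp this
    exact absurd this (by decide)
  · have h2 : (f 2 : Sym2 W) = s(v, w) := (Sym2.mem_and_mem_iff hvw).mp ⟨hv2, hw2⟩
    have h3 : (f 3 : Sym2 W) = s(v, w) := (Sym2.mem_and_mem_iff hvw).mp ⟨hv3, hw3⟩
    have : f 2 = f 3 := Subtype.ext (h2.trans h3.symm)
    have : (2 : Fin 4) = 3 := f.injective this
    exact absurd this (by decide)

/-! ### Hard direction: setup -/

variable (G : SimpleGraph V)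

/-- Claw-freeness, in elementwise form. -/
def ClawFree' : Prop :=
  ∀ v a b c : V, G.Adj v a → G.Adj v b → G.Adj v c → a ≠ b → a ≠ c → b ≠ c →
    ¬ G.Adj a b → ¬ G.Adj a c → ¬ G.Adj b c → False

/-- Diamond-freeness as: any two common neighbours of an edge are adjacent. -/
def DiamondFree' : Prop :=
  ∀ u v a b : V, G.Adj u v → G.Adj u a → G.Adj v a → G.Adj u b → G.Adj v b → a ≠ b → G.Adj a b

/-- A maximal clique, as a set. -/
def MaxClique (S : Set V) : Prop :=
  G.IsClique S ∧ ∀ T, G.IsClique T → S ⊆ T → T ⊆ S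

/-- The closed common neighbourhood of an edge. -/
def Qx (u v : V) : Set V := {u, v} ∪ (G.neighborSet u ∩ G.neighborSet v)

variable {G}

lemma mem_Qx_iff {u v w : V} : w ∈ Qx G u v ↔ w = u ∨ w = v ∨ (G.Adj u w ∧ G.Adj v w) := by
  simp [Qx, or_assoc]

lemma Qx_comm (u v : V) : Qx G u v = Qx G v u := by
  ext w; rw [mem_Qx_iff, mem_Qx_iff]; tauto

lemma left_mem_Qx {u v : V} : u ∈ Qx G u v := mem_Qx_iff.mpr (Or.inl rfl)

lemma right_mem_Qx {u v : V} : v ∈ Qx G u v := mem_Qx_iff.mpr (Or.inr (Or.inl rfl))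

lemma mem_Qx_of_adj {u v w : V} (h1 : G.Adj u w) (h2 : G.Adj v w) : w ∈ Qx G u v :=
  mem_Qx_iff.mpr (Or.inr (Or.inr ⟨h1, h2⟩))

lemma isClique_Qx (hdi : DiamondFree' G) {u v : V} (huv : G.Adj u v) :
    G.IsClique (Qx G u v) := by
  rw [isClique_iff]
  intro x hx y hy hxy
  rw [mem_Qx_iff] at hx hy
  rcases hx with rfl | rfl | ⟨hx1, hx2⟩ <;> rcases hy with rfl | rfl | ⟨hy1, hy2⟩
  · exact absurd rfl hxy
  · exact huv
  · exact hy1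
  · exact huv.symm
  · exact absurd rfl hxy
  · exact hy2
  · exact hx1.symm
  · exact hx2.symm
  · exact hdi u v x y huv hx1 hx2 hy1 hy2 hxy

lemma clique_subset_Qx {S : Set V} (hS : G.IsClique S) {u v : V} (hu : u ∈ S) (hv : v ∈ S) :
    S ⊆ Qx G u v := by
  intro w hw
  by_cases hwu : w = u
  · exact hwu ▸ left_mem_Qx
  by_cases hwv : w = v
  · exact hwv ▸ right_mem_Qx
  exact mem_Qx_of_adj (hS hu hw (fun h => hwu h.symm)) (hS hv hw (fun h => hwv h.symm))

lemma maxClique_Qx (hdi : DiamondFree' G) {u v : V} (huv : G.Adj u v) :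
    MaxClique G (Qx G u v) :=
  ⟨isClique_Qx hdi huv, fun T hT hsub => clique_subset_Qx hT (hsub left_mem_Qx) (hsub right_mem_Qx)⟩

lemma maxClique_eq_Qx (hdi : DiamondFree' G) {S : Set V} (hS : MaxClique G S) {u v : V}
    (hu : u ∈ S) (hv : v ∈ S) (huv : G.Adj u v) : S = Qx G u v :=
  Set.Subset.antisymm (clique_subset_Qx hS.1 hu hv)
    (hS.2 _ (isClique_Qx hdi huv) (clique_subset_Qx hS.1 hu hv))

/-- Whether a vertex has two nonadjacent neighbours (i.e. lies in two maximal cliques). -/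
def TwoEnds (G : SimpleGraph V) (v : V) : Prop :=
  ∃ p : V × V, G.Adj v p.1 ∧ G.Adj v p.2 ∧ ¬ G.Adj p.1 p.2 ∧ p.1 ≠ p.2

open Classical in
/-- The pair of "ends" of a vertex, viewed as an edge of the target graph `H`. -/
noncomputable def pr (G : SimpleGraph V) (v : V) : Sym2 (Set V ⊕ V) :=
  if h : TwoEnds G v
  then s(Sum.inl (Qx G v h.choose.1), Sum.inl (Qx G v h.choose.2))
  else s(Sum.inl (insert v (G.neighborSet v)), Sum.inr v)

lemma maxClique_bigQ {v : V} (h : ¬ TwoEnds G v) :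
    MaxClique G (insert v (G.neighborSet v)) := by
  constructor
  · rw [isClique_iff]
    intro x hx y hy hxy
    rcases Set.mem_insert_iff.mp hx with rfl | hx
    · rcases Set.mem_insert_iff.mp hy with rfl | hy
      · exact absurd rfl hxy
      · exact hy
    · rcases Set.mem_insert_iff.mp hy with rfl | hy
      · exact hx.symm
      · by_contra hadj
        exact h ⟨(x, y), hx, hy, hadj, hxy⟩
  · intro T hT hsub t ht
    by_cases htv : t = v
    · exact htv ▸ Set.mem_insert _ _
    · exact Set.mem_insert_of_mem _ (hT (hsub (Set.mem_insert _ _)) ht (fun h => htv h.symm))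

/-- Every element of `pr G v` is either `inr v` or a maximal clique containing `v`. -/
lemma mem_pr (hdi : DiamondFree' G) {v : V} {x : Set V ⊕ V} (hx : x ∈ pr G v) :
    x = Sum.inr v ∨ ∃ S, x = Sum.inl S ∧ v ∈ S ∧ MaxClique G S := by
  by_cases h : TwoEnds G v
  · rw [pr, dif_pos h, Sym2.mem_iff] at hx
    obtain ⟨h1, h2, -, -⟩ := h.choose_spec
    rcases hx with rfl | rfl
    · exact Or.inr ⟨_, rfl, left_mem_Qx, maxClique_Qx hdi h1⟩
    · exact Or.inr ⟨_, rfl, left_mem_Qx, maxClique_Qx hdi h2⟩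
  · rw [pr, dif_neg h, Sym2.mem_iff] at hx
    rcases hx with rfl | rfl
    · exact Or.inr ⟨_, rfl, Set.mem_insert _ _, maxClique_bigQ h⟩
    · exact Or.inl rfl

lemma inr_mem_pr {v w : V} (hdi : DiamondFree' G) (hx : Sum.inr w ∈ pr G v) : w = v := by
  rcases mem_pr hdi hx with h | ⟨S, h, -, -⟩
  · exact Sum.inr.inj h
  · exact absurd h (by simp)

lemma inl_mem_pr (hdi : DiamondFree' G) {v : V} {S : Set V} (hx : Sum.inl S ∈ pr G v) :
    v ∈ S ∧ MaxClique G S := by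
  rcases mem_pr hdi hx with h | ⟨T, h, h1, h2⟩
  · exact absurd h (by simp)
  · obtain rfl : S = T := Sum.inl.inj h
    exact ⟨h1, h2⟩

lemma Qx_mem_pr (hcl : ClawFree' G) (hdi : DiamondFree' G) {u v : V} (huv : G.Adj u v) :
    Sum.inl (Qx G u v) ∈ pr G u := by
  by_cases h : TwoEnds G u
  · rw [pr, dif_pos h, Sym2.mem_iff]
    obtain ⟨ha, hb, hab, hne⟩ := h.choose_spec
    set a := h.choose.1
    set b := h.choose.2
    have key : ∀ c : V, G.Adj u c → G.Adj a c → Qx G u c = Qx G u a := by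
      intro c huc hac
      exact (maxClique_eq_Qx hdi (maxClique_Qx hdi ha) left_mem_Qx
        (mem_Qx_of_adj huc hac) huc).symm
    have keyb : ∀ c : V, G.Adj u c → G.Adj b c → Qx G u c = Qx G u b := by
      intro c huc hbc
      exact (maxClique_eq_Qx hdi (maxClique_Qx hdi hb) left_mem_Qx
        (mem_Qx_of_adj huc hbc) huc).symm
    by_cases hva : v = a
    · exact Or.inl (by rw [hva])
    by_cases hvb : v = b
    · exact Or.inr (by rw [hvb])
    by_cases hadjva : G.Adj a v
    · exact Or.inl (by rw [key v huv hadjva])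
    by_cases hadjvb : G.Adj b v
    · exact Or.inr (by rw [keyb v huv hadjvb])
    exact absurd (hcl u a b v ha hb huv hne (fun h => hva h.symm) (fun h => hvb h.symm)
      hab hadjva hadjvb) not_false
  · rw [pr, dif_neg h, Sym2.mem_iff]
    left
    congr 1
    exact (maxClique_eq_Qx hdi (maxClique_bigQ h) (Set.mem_insert _ _)
      (Set.mem_insert_of_mem _ huv) huv).symm

lemma pr_not_isDiag (v : V) : ¬ (pr G v).IsDiag := by
  by_cases h : TwoEnds G v
  · rw [pr, dif_pos h, Sym2.mk_isDiag_iff]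
    obtain ⟨ha, hb, hab, hne⟩ := h.choose_spec
    intro heq
    have hQ : Qx G v h.choose.1 = Qx G v h.choose.2 := Sum.inl.inj heq
    have : h.choose.2 ∈ Qx G v h.choose.1 := hQ ▸ right_mem_Qx
    rcases mem_Qx_iff.mp this with h1 | h1 | ⟨-, h1⟩
    · exact G.ne_of_adj hb h1.symm
    · exact hne h1.symm
    · exact hab h1
  · rw [pr, dif_neg h, Sym2.mk_isDiag_iff]
    simp

lemma pr_injective (hdi : DiamondFree' G) : Function.Injective (pr G) := by
  intro u v heq
  by_contra huv
  by_cases h : TwoEnds G u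
  · have hA : Sum.inl (Qx G u h.choose.1) ∈ pr G u := by
      rw [pr, dif_pos h, Sym2.mem_iff]; exact Or.inl rfl
    have hB : Sum.inl (Qx G u h.choose.2) ∈ pr G u := by
      rw [pr, dif_pos h, Sym2.mem_iff]; exact Or.inr rfl
    have hABne : Qx G u h.choose.1 ≠ Qx G u h.choose.2 := by
      intro hq
      have := pr_not_isDiag (G := G) u
      rw [pr, dif_pos h, Sym2.mk_isDiag_iff] at this
      exact this (by rw [hq])
    have hAu := (inl_mem_pr hdi hA).1
    have hBu := (inl_mem_pr hdi hB).1
    have hAm := (inl_mem_pr hdi hA).2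
    have hBm := (inl_mem_pr hdi hB).2
    have hAv := (inl_mem_pr hdi (heq ▸ hA)).1
    have hBv := (inl_mem_pr hdi (heq ▸ hB)).1
    have hadj : G.Adj u v := hAm.1 hAu hAv huv
    exact hABne ((maxClique_eq_Qx hdi hAm hAu hAv hadj).trans
      (maxClique_eq_Qx hdi hBm hBu hBv hadj).symm)
  · have hr : Sum.inr u ∈ pr G u := by
      rw [pr, dif_neg h, Sym2.mem_iff]; exact Or.inr rfl
    exact huv (inr_mem_pr hdi (heq ▸ hr))

lemma adj_of_mem_pr (hdi : DiamondFree' G) {u v : V} {x : Set V ⊕ V}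
    (hu : x ∈ pr G u) (hv : x ∈ pr G v) (huv : u ≠ v) : G.Adj u v := by
  rcases mem_pr hdi hu with rfl | ⟨S, rfl, hS1, hS2⟩
  · exact absurd (inr_mem_pr hdi hv) huv
  · exact hS2.1 hS1 (inl_mem_pr hdi hv).1 huv

/-- The target graph. -/
noncomputable def target (G : SimpleGraph V) : SimpleGraph (Set V ⊕ V) :=
  SimpleGraph.fromEdgeSet (Set.range (pr G))

lemma pr_mem_edgeSet (v : V) : pr G v ∈ (target G).edgeSet := by
  rw [target, edgeSet_fromEdgeSet]
  exact ⟨⟨v, rfl⟩, pr_not_isDiag v⟩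

lemma target_cliqueFree (hdi : DiamondFree' G) : (target G).CliqueFree 3 := by
  classical
  intro t ht
  rw [is3Clique_iff] at ht
  obtain ⟨A, B, C, hAB, hAC, hBC, -⟩ := ht
  have hABr : s(A, B) ∈ Set.range (pr G) := ((fromEdgeSet_adj _).mp hAB).1
  have hBCr : s(B, C) ∈ Set.range (pr G) := ((fromEdgeSet_adj _).mp hBC).1
  have hACr : s(A, C) ∈ Set.range (pr G) := ((fromEdgeSet_adj _).mp hAC).1
  obtain ⟨u, hu⟩ := hABr
  obtain ⟨v, hv⟩ := hBCr
  obtain ⟨w, hw⟩ := hACr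
  have hABne : A ≠ B := (fromEdgeSet_adj _ |>.mp hAB).2
  have hACne : A ≠ C := (fromEdgeSet_adj _ |>.mp hAC).2
  have hBCne : B ≠ C := (fromEdgeSet_adj _ |>.mp hBC).2
  have hAu : A ∈ pr G u := by rw [hu]; exact Sym2.mem_mk_left _ _
  have hBu : B ∈ pr G u := by rw [hu]; exact Sym2.mem_mk_right _ _
  have hBv : B ∈ pr G v := by rw [hv]; exact Sym2.mem_mk_left _ _
  have hCv : C ∈ pr G v := by rw [hv]; exact Sym2.mem_mk_right _ _
  have hAw : A ∈ pr G w := by rw [hw]; exact Sym2.mem_mk_left _ _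
  have hCw : C ∈ pr G w := by rw [hw]; exact Sym2.mem_mk_right _ _
  have huv : u ≠ v := by
    rintro rfl
    rw [hu, Sym2.eq_iff] at hv
    rcases hv with ⟨h1, -⟩ | ⟨h1, -⟩
    · exact hABne h1
    · exact hACne h1
  have huw : u ≠ w := by
    rintro rfl
    rw [hu, Sym2.eq_iff] at hw
    rcases hw with ⟨-, h2⟩ | ⟨h1, -⟩
    · exact hBCne h2
    · exact hACne h1
  have hvw : v ≠ w := by
    rintro rfl
    rw [hv, Sym2.eq_iff] at hw
    rcases hw with ⟨h1, -⟩ | ⟨h1, -⟩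
    · exact hABne h1.symm
    · exact hBCne h1
  -- None of A, B, C is of the form `inr`.
  obtain ⟨A', rfl⟩ : ∃ A', A = Sum.inl A' := by
    rcases A with A' | x
    · exact ⟨A', rfl⟩
    · exact absurd ((inr_mem_pr hdi hAu).symm.trans (inr_mem_pr hdi hAw)) huw
  obtain ⟨B', rfl⟩ : ∃ B', B = Sum.inl B' := by
    rcases B with B' | x
    · exact ⟨B', rfl⟩
    · exact absurd ((inr_mem_pr hdi hBu).symm.trans (inr_mem_pr hdi hBv)) huv
  obtain ⟨C', rfl⟩ : ∃ C', C = Sum.inl C' := by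
    rcases C with C' | x
    · exact ⟨C', rfl⟩
    · exact absurd ((inr_mem_pr hdi hCv).symm.trans (inr_mem_pr hdi hCw)) hvw
  have hA'B' : A' ≠ B' := fun h => hABne (by rw [h])
  obtain ⟨huA, hAm⟩ := inl_mem_pr hdi hAu
  obtain ⟨huB, hBm⟩ := inl_mem_pr hdi hBu
  obtain ⟨hvB, -⟩ := inl_mem_pr hdi hBv
  obtain ⟨hvC, hCm⟩ := inl_mem_pr hdi hCv
  obtain ⟨hwA, -⟩ := inl_mem_pr hdi hAw
  obtain ⟨hwC, -⟩ := inl_mem_pr hdi hCw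
  have hadjuv : G.Adj u v := hBm.1 huB hvB huv
  have hadjuw : G.Adj u w := hAm.1 huA hwA huw
  have hadjvw : G.Adj v w := hCm.1 hvC hwC hvw
  have hB'eq : B' = Qx G u v := maxClique_eq_Qx hdi hBm huB hvB hadjuv
  have hA'eq : A' = Qx G u w := maxClique_eq_Qx hdi hAm huA hwA hadjuw
  have hwQ : w ∈ Qx G u v := mem_Qx_of_adj hadjuw hadjvw
  have : Qx G u v = Qx G u w :=
    maxClique_eq_Qx hdi (maxClique_Qx hdi hadjuv) left_mem_Qx hwQ hadjuw
  exact hA'B' (by rw [hA'eq, hB'eq, this])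

/-- The isomorphism `G ≃g (target G).lineGraph`. -/
noncomputable def targetIso (hcl : ClawFree' G) (hdi : DiamondFree' G) :
    G ≃g (target G).lineGraph := by
  refine ⟨Equiv.ofBijective (fun v => ⟨pr G v, pr_mem_edgeSet v⟩) ⟨?_, ?_⟩, ?_⟩
  · intro u v h
    exact pr_injective hdi (congrArg Subtype.val h)
  · rintro ⟨e, he⟩
    rw [target, edgeSet_fromEdgeSet] at he
    obtain ⟨⟨v, rfl⟩, -⟩ := he
    exact ⟨v, rfl⟩
  · intro a b
    rw [lineGraph_adj_iff_exists]
    simp only [Equiv.ofBijective_apply, ne_eq, Subtype.mk.injEq]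
    constructor
    · rintro ⟨hne, x, hx1, hx2⟩
      refine adj_of_mem_pr hdi hx1 hx2 ?_
      rintro rfl
      exact hne rfl
    · intro hab
      refine ⟨fun h => G.ne_of_adj hab (pr_injective hdi (congrArg Subtype.val h)), Sum.inl (Qx G a b),
        Qx_mem_pr hcl hdi hab, ?_⟩
      rw [Qx_comm]
      exact Qx_mem_pr hcl hdi hab.symm

/-! ### Extracting the elementwise hypotheses from the embedding hypotheses -/

lemma clawFree'_of (h : IsEmpty (clawGraph ↪g G)) : ClawFree' G := by
  intro v a b c hva hvb hvc hab hac hbc nab nac nbc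
  refine h.false (⟨⟨Sum.elim (fun _ => v) ![a, b, c], ?_⟩, ?_⟩ : clawGraph ↪g G)
  · intro x y hxy
    rcases x with x | x <;> rcases y with y | y <;> fin_cases x <;> fin_cases y <;>
      simp_all <;>
      first
        | exact G.ne_of_adj hva hxy
        | exact G.ne_of_adj hvb hxy
        | exact G.ne_of_adj hvc hxy
        | exact G.ne_of_adj hva hxy.symm
        | exact G.ne_of_adj hvb hxy.symm
        | exact G.ne_of_adj hvc hxy.symm
  · intro x y
    rcases x with x | x <;> rcases y with y | y <;> fin_cases x <;> fin_cases y <;>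
      simp [clawGraph] <;>
      first
        | exact hva | exact hvb | exact hvc
        | exact hva.symm | exact hvb.symm | exact hvc.symm
        | exact nab | exact nac | exact nbc
        | exact fun h' => nab h'.symm | exact fun h' => nac h'.symm | exact fun h' => nbc h'.symm
        | exact G.irrefl

lemma diamondFree'_of (h : IsEmpty (diamondGraph ↪g G)) : DiamondFree' G := by
  intro u v a b huv hua hva hub hvb hab
  by_contra nab
  refine h.false (⟨⟨![a, b, u, v], ?_⟩, ?_⟩ : diamondGraph ↪g G)
  · intro x y hxy
    fin_cases x <;> fin_cases y <;> simp_all <;>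
      first
        | exact G.ne_of_adj hua hxy | exact G.ne_of_adj hua hxy.symm
        | exact G.ne_of_adj hva hxy | exact G.ne_of_adj hva hxy.symm
        | exact G.ne_of_adj hub hxy | exact G.ne_of_adj hub hxy.symm
        | exact G.ne_of_adj hvb hxy | exact G.ne_of_adj hvb hxy.symm
        | exact G.ne_of_adj huv hxy | exact G.ne_of_adj huv hxy.symm
  · intro x y
    fin_cases x <;> fin_cases y <;>
      first
        | (refine iff_of_false ?_ (by decide); first
            | exact G.irrefl | exact nab | exact fun h' => nab h'.symm)
        | (refine iff_of_true ?_ (by decide); first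
            | exact hua | exact hua.symm | exact hva | exact hva.symm
            | exact hub | exact hub.symm | exact hvb | exact hvb.symm
            | exact huv | exact huv.symm)

end LGAux

/-- A graph is the line graph of a triangle-free graph iff it contains no induced claw
and no induced diamond. -/
theorem lineGraph_of_triangleFree_iff {V : Type u} [Fintype V] (G : SimpleGraph V) :
    (∃ (W : Type u) (H : SimpleGraph W), H.CliqueFree 3 ∧ Nonempty (G ≃g H.lineGraph)) ↔
      IsEmpty (clawGraph ↪g G) ∧ IsEmpty (diamondGraph ↪g G) := by
  constructor
  · rintro ⟨W, H, hH, ⟨iso⟩⟩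
    refine ⟨⟨fun f => (LGAux.lineGraph_clawFree H).false (iso.toEmbedding.comp f)⟩,
      ⟨fun f => (LGAux.lineGraph_diamondFree hH).false (iso.toEmbedding.comp f)⟩⟩
  · rintro ⟨h1, h2⟩
    have hcl := LGAux.clawFree'_of h1
    have hdi := LGAux.diamondFree'_of h2
    exact ⟨Set V ⊕ V, LGAux.target G, LGAux.target_cliqueFree hdi,
      ⟨LGAux.targetIso hcl hdi⟩⟩
end

section
/- If G is a graph of girth at least k+1 and x_1, …, x_k are vertices of G, then every induced subgraph H of G that is connected, contains x_1, …, x_k, and is vertex-minimal with respect to these properties, is a tree. -/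
open SimpleGraph Walk

private lemma aux_takeUntil_avoid {W : Type*} {Γ : SimpleGraph W} [DecidableEq W] {c v b : W}
    (d : Γ.Walk c v) (hnd : d.support.Nodup) (hb : b ∈ d.support) (hbv : b ≠ v) :
    v ∉ (d.takeUntil b hb).support := by
  intro hvmem
  have hsup : d.support = (d.takeUntil b hb).support ++ (d.dropUntil b hb).support.tail := by
    conv_lhs => rw [← d.take_spec hb]
    exact Walk.support_append _ _
  rw [hsup, List.nodup_append] at hnd
  exact hnd.2.2 _ hvmem _ (Walk.end_mem_tail_support_of_ne hbv _) rfl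

private lemma aux_cycle_avoid {W : Type*} {Γ : SimpleGraph W} [DecidableEq W] {a v b c : W}
    (q : Γ.Walk a a) (hq : q.IsCycle) (hv : v ∈ q.support) (hb : b ∈ q.support)
    (hc : c ∈ q.support) (hbv : b ≠ v) (hcv : c ≠ v) :
    ∃ p : Γ.Walk b c, v ∉ p.support := by
  have htail : ∀ y, y ∈ q.support → y ∈ q.support.tail := by
    intro y hy
    cases q with
    | nil => exact absurd hq.three_le_length (by simp)
    | cons h r =>
      rw [Walk.support_cons] at hy ⊢
      rcases List.mem_cons.mp hy with rfl | hy'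
      · exact Walk.end_mem_support r
      · exact hy'
  have hq' : (q.rotate v hv).IsCycle := hq.rotate hv
  have hmemrot : ∀ y, y ∈ q.support → y ∈ (q.rotate v hv).support.tail := fun y hy =>
    ((Walk.support_rotate q v hv).perm.mem_iff).mpr (htail y hy)
  have hnotnil : ¬ (q.rotate v hv).Nil := by
    rw [Walk.not_nil_iff_lt_length]
    have := hq'.three_le_length
    omega
  obtain ⟨u, hadj, r, hre⟩ := Walk.not_nil_iff.mp hnotnil
  have hrsup : (q.rotate v hv).support.tail = r.support := by
    rw [hre, Walk.support_cons]; rfl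
  have hnd : r.support.Nodup := hrsup ▸ hq'.support_nodup
  have hbr : b ∈ r.support := hrsup ▸ hmemrot b hb
  have hcr : c ∈ r.support := hrsup ▸ hmemrot c hc
  by_cases hbt : b ∈ (r.takeUntil c hcr).support
  · exact ⟨(r.takeUntil c hcr).dropUntil b hbt, fun hvm =>
      aux_takeUntil_avoid r hnd hcr hcv (Walk.support_dropUntil_subset _ hbt hvm)⟩
  · have hbd : b ∈ (r.dropUntil c hcr).support := by
      have hbr' := hbr
      rw [← r.take_spec hcr, Walk.mem_support_append_iff] at hbr'
      tauto
    have hsup : r.support = (r.takeUntil c hcr).support ++ (r.dropUntil c hcr).support.tail := by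
      conv_lhs => rw [← r.take_spec hcr]
      exact Walk.support_append _ _
    have hnd2 := hnd
    rw [hsup, List.nodup_append] at hnd2
    have hndd : (r.dropUntil c hcr).support.Nodup := by
      rw [Walk.support_eq_cons]
      exact List.nodup_cons.mpr ⟨fun h => hnd2.2.2 _ (Walk.end_mem_support _) _ h rfl, hnd2.2.1⟩
    refine ⟨((r.dropUntil c hcr).takeUntil b hbd).reverse, ?_⟩
    rw [Walk.support_reverse, List.mem_reverse]
    exact aux_takeUntil_avoid (r.dropUntil c hcr) hndd hbd hbv

private lemma aux_first_hit {W : Type*} {Γ : SimpleGraph W} (S : Set W) :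
    ∀ {u t : W} (_P : Γ.Walk u t), t ∈ S →
    ∃ z, z ∈ S ∧ ∃ Q : Γ.Walk u z, ∀ y ∈ Q.support, y ∈ S → y = z := by
  intro u t P
  induction P with
  | nil => exact fun ht => ⟨_, ht, Walk.nil, by simp⟩
  | @cons u' v' w' h P ih =>
    intro ht
    by_cases hu : u' ∈ S
    · exact ⟨u', hu, Walk.nil, by simp⟩
    · obtain ⟨z, hz, Q, hQ⟩ := ih ht
      refine ⟨z, hz, Walk.cons h Q, ?_⟩
      intro y hy hyS
      rw [Walk.support_cons] at hy
      rcases List.mem_cons.mp hy with rfl | hy'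
      · exact absurd hyS hu
      · exact hQ y hy' hyS

private lemma aux_transfer {V : Type*} (G : SimpleGraph V) (s B : Set V) :
    ∀ {a b : ↥s} (p : (G.induce s).Walk a b), (∀ u ∈ p.support, (u : V) ∉ B) →
    ∀ (ha : (a : V) ∈ s \ B) (hb : (b : V) ∈ s \ B),
    (G.induce (s \ B)).Reachable ⟨a, ha⟩ ⟨b, hb⟩ := by
  intro a b p
  induction p with
  | nil =>
    intro _ ha hb
    exact Reachable.refl _
  | @cons u' v' w' h p ih =>
    intro hsup ha hb
    have hmemv : v' ∈ (Walk.cons h p).support := by simp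
    have hv' : (v' : V) ∈ s \ B := ⟨v'.2, hsup v' hmemv⟩
    have hadj : (G.induce (s \ B)).Adj ⟨u', ha⟩ ⟨v', hv'⟩ := by simpa using h
    have hsup' : ∀ u ∈ p.support, (u : V) ∉ B := fun y hy => hsup y (by simp [hy])
    exact (hadj.reachable).trans (ih hsup' hv' hb)

/-- If `G` has girth at least `k + 1` and `x₁, …, x_k` are vertices of `G`, then every
connected induced subgraph of `G` containing all the `xᵢ` and vertex-minimal with these
properties is a tree. -/
theorem minimal_connected_induced_is_tree {V : Type*} [Fintype V] (G : SimpleGraph V)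
    (k : ℕ) (x : Fin k → V) (hgirth : (k + 1 : ℕ∞) ≤ G.egirth)
    (s : Set V) (hconn : (G.induce s).Connected) (hx : ∀ i, x i ∈ s)
    (hmin : ∀ t : Set V, t ⊂ s → ¬ ((G.induce t).Connected ∧ ∀ i, x i ∈ t)) :
    (G.induce s).IsTree := by
  classical
  refine ⟨hconn, ?_⟩
  intro a q hq
  -- the cycle has length at least k + 1
  have hqG : (q.map (Embedding.induce s (G := G)).toHom).IsCycle :=
    (Walk.map_isCycle_iff_of_injective (Embedding.induce s (G := G)).injective).mpr hq
  have hlen : k + 1 ≤ q.length := by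
    have h1 := le_egirth.mp hgirth _ _ hqG
    rw [Walk.length_map] at h1
    exact_mod_cast h1
  have hnn : ¬ q.Nil := by
    rw [Walk.not_nil_iff_lt_length]
    have := hq.three_le_length
    omega
  obtain ⟨a2, hadj2, r2, hqe⟩ := Walk.not_nil_iff.mp hnn
  have ha2mem : a2 ∈ q.support := by rw [hqe]; simp
  have ha2ne : a2 ≠ a := hadj2.ne'
  have hamem : a ∈ q.support := q.start_mem_support
  -- target vertex for each cycle vertex
  set c0 : ↥s → ↥s := fun v => if v = a then a2 else a with hc0def
  have hc0mem : ∀ v, c0 v ∈ q.support := by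
    intro v
    by_cases h : v = a <;> simp [hc0def, h, ha2mem, hamem]
  have hc0ne : ∀ v, c0 v ≠ v := by
    intro v
    by_cases h : v = a
    · subst h; simpa [hc0def] using ha2ne
    · simpa [hc0def, h] using fun he => h he.symm
  -- the "far side" of v
  set D : ↥s → Set ↥s :=
    fun v => {b | b ≠ v ∧ ¬ ∃ p : (G.induce s).Walk b (c0 v), v ∉ p.support} with hDdef
  have hwalkD : ∀ v b : ↥s, b ∉ D v → b ≠ v →
      ∃ p : (G.induce s).Walk b (c0 v), v ∉ p.support := by
    intro v b hb hbv
    by_contra hno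
    exact hb ⟨hbv, hno⟩
  have hDnot : ∀ v ∈ q.support, ∀ y ∈ q.support, y ∉ D v := by
    intro v hv y hy hyD
    rcases hyD with ⟨hyne, hno⟩
    exact hno (aux_cycle_avoid q hq hv hy (hc0mem v) hyne (hc0ne v))
  have hYnot : ∀ (v b : ↥s) (p : (G.induce s).Walk b (c0 v)), v ∉ p.support →
      ∀ y ∈ p.support, y ∉ D v := by
    intro v b p hvp y hy hyD
    rcases hyD with ⟨hyne, hno⟩
    exact hno ⟨p.dropUntil y hy, fun hvm => hvp (Walk.support_dropUntil_subset _ hy hvm)⟩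
  -- every nonterminal cycle vertex has a nonempty far side
  have claimNonempty : ∀ v ∈ q.support, (¬ ∃ i, x i = ↑v) → (D v).Nonempty := by
    intro v hv hnont
    by_contra hne
    rw [Set.not_nonempty_iff_eq_empty] at hne
    have hss : s \ {(v : V)} ⊂ s :=
      ⟨Set.diff_subset, fun hsub => (hsub v.2).2 rfl⟩
    apply hmin _ hss
    have hc0' : ((c0 v : ↥s) : V) ∈ s \ {(v : V)} :=
      ⟨(c0 v).2, fun he => hc0ne v (Subtype.ext he)⟩
    constructor
    · have hreach : ∀ z : ↥(s \ {(v : V)}),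
          (G.induce (s \ {(v : V)})).Reachable z ⟨c0 v, hc0'⟩ := by
        intro z
        have hz1 : (z : V) ∈ s := z.2.1
        have hzv : (⟨z, hz1⟩ : ↥s) ≠ v := fun he => z.2.2 (congrArg Subtype.val he)
        have hznD : (⟨z, hz1⟩ : ↥s) ∉ D v := by rw [hne]; exact Set.notMem_empty _
        obtain ⟨p, hp⟩ := hwalkD v _ hznD hzv
        have hcond : ∀ u ∈ p.support, (u : V) ∉ ({(v : V)} : Set V) := by
          intro u hu he
          exact hp (by rwa [show u = v from Subtype.ext he] at hu)
        exact aux_transfer G s {(v : V)} p hcond ⟨hz1, z.2.2⟩ hc0'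
      haveI : Nonempty ↥(s \ {(v : V)}) := ⟨⟨c0 v, hc0'⟩⟩
      exact ⟨fun z w => (hreach z).trans (hreach w).symm⟩
    · intro i
      exact ⟨hx i, fun he => hnont ⟨i, he⟩⟩
  -- every nonterminal cycle vertex has a terminal on its far side
  have claimTermD : ∀ v ∈ q.support, (¬ ∃ i, x i = ↑v) → ∃ i b, b ∈ D v ∧ x i = ↑b := by
    intro v hv hnont
    by_contra hno
    push_neg at hno
    obtain ⟨b0, hb0⟩ := claimNonempty v hv hnont
    set B : Set V := Subtype.val '' (D v) with hBdef
    have hssub : s \ B ⊂ s := ⟨Set.diff_subset, fun hsub => (hsub b0.2).2 ⟨b0, hb0, rfl⟩⟩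
    apply hmin _ hssub
    have hc0nD : c0 v ∉ D v := hDnot v hv (c0 v) (hc0mem v)
    have hc0B : ((c0 v : ↥s) : V) ∈ s \ B := by
      refine ⟨(c0 v).2, fun hmem => ?_⟩
      obtain ⟨b', hb', he⟩ := hmem
      exact hc0nD (by rwa [show b' = c0 v from Subtype.ext he] at hb')
    constructor
    · have hreach : ∀ z : ↥(s \ B), (G.induce (s \ B)).Reachable z ⟨c0 v, hc0B⟩ := by
        intro z
        have hz1 : (z : V) ∈ s := z.2.1
        have hznD : (⟨z, hz1⟩ : ↥s) ∉ D v := fun hmem => z.2.2 ⟨⟨z, hz1⟩, hmem, rfl⟩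
        have hwalk : ∃ p : (G.induce s).Walk ⟨z, hz1⟩ (c0 v), ∀ y ∈ p.support, y ∉ D v := by
          by_cases hzv : (⟨z, hz1⟩ : ↥s) = v
          · rw [hzv]
            obtain ⟨p, hp⟩ : ∃ p : (G.induce s).Walk v (c0 v),
                ∀ y ∈ p.support, y ∈ q.support := by
              refine ⟨(q.dropUntil v hv).append (q.takeUntil (c0 v) (hc0mem v)), ?_⟩
              intro y hy
              rcases (Walk.mem_support_append_iff _ _).mp hy with h1 | h2
              · exact Walk.support_dropUntil_subset _ hv h1
              · exact Walk.support_takeUntil_subset _ (hc0mem v) h2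
            exact ⟨p, fun y hy => hDnot v hv y (hp y hy)⟩
          · obtain ⟨p, hp⟩ := hwalkD v _ hznD hzv
            exact ⟨p, fun y hy => hYnot v _ p hp y hy⟩
        obtain ⟨p, hp⟩ := hwalk
        have hcond : ∀ u ∈ p.support, (u : V) ∉ B := by
          intro u hu hmem
          obtain ⟨b', hb', he⟩ := hmem
          exact hp u hu (by rwa [show b' = u from Subtype.ext he] at hb')
        exact aux_transfer G s B p hcond ⟨hz1, z.2.2⟩ hc0B
      haveI : Nonempty ↥(s \ B) := ⟨⟨c0 v, hc0B⟩⟩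
      exact ⟨fun z w => (hreach z).trans (hreach w).symm⟩
    · intro i
      refine ⟨hx i, fun hmem => ?_⟩
      obtain ⟨b', hb', he⟩ := hmem
      exact hno i b' hb' he.symm
  -- first-hit property: walks from the far side of v first hit the cycle at v
  have claimA : ∀ v ∈ q.support, ∀ b ∈ D v, ∀ z ∈ q.support,
      ∀ Q : (G.induce s).Walk b z, (∀ y ∈ Q.support, y ∈ q.support → y = z) → z = v := by
    intro v hv b hbD z hz Q hQ
    by_contra hzv
    have hvQ : v ∉ Q.support := fun hmem => hzv ((hQ v hmem hv).symm)
    obtain ⟨R, hR⟩ := aux_cycle_avoid q hq hv hz (hc0mem v) hzv (hc0ne v)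
    rcases hbD with ⟨hbne, hno⟩
    refine hno ⟨Q.append R, fun hmem => ?_⟩
    rcases (Walk.mem_support_append_iff _ _).mp hmem with h1 | h2
    · exact hvQ h1
    · exact hR h2
  -- far sides of distinct cycle vertices are disjoint
  have claimDisj : ∀ v ∈ q.support, ∀ w ∈ q.support, v ≠ w →
      ∀ b, b ∈ D v → b ∈ D w → False := by
    intro v hv w hw hvw b hbv hbw
    obtain ⟨P⟩ := hconn.preconnected b a
    obtain ⟨z, hz, Q, hQ⟩ := aux_first_hit {y : ↥s | y ∈ q.support} P hamem
    have h1 := claimA v hv b hbv z hz Q hQ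
    have h2 := claimA w hw b hbw z hz Q hQ
    exact hvw (h1.symm.trans h2)
  -- assign a terminal to each cycle vertex
  set Pv : ↥s → Fin k → Prop :=
    fun v i => x i = ↑v ∨ ((¬ ∃ j, x j = ↑v) ∧ ∃ b, b ∈ D v ∧ x i = ↑b) with hPvdef
  have claimE : ∀ v ∈ q.support, ∃ i, Pv v i := by
    intro v hv
    by_cases h : ∃ j, x j = ↑v
    · obtain ⟨j, hj⟩ := h
      exact ⟨j, Or.inl hj⟩
    · obtain ⟨i, b, hb, he⟩ := claimTermD v hv h
      exact ⟨i, Or.inr ⟨h, b, hb, he⟩⟩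
  obtain ⟨i0, _⟩ := claimE a hamem
  set f : ↥s → Fin k := fun v => if h : ∃ i, Pv v i then h.choose else i0 with hfdef
  have hfP : ∀ v ∈ q.support, Pv v (f v) := by
    intro v hv
    have h := claimE v hv
    rw [show f v = h.choose from dif_pos h]
    exact h.choose_spec
  -- pigeonhole over the cycle vertices
  haveI : Fintype ↥s := Fintype.ofFinite _
  set C : Finset ↥s := q.support.tail.toFinset with hCdef
  have hcard : k + 1 ≤ C.card := by
    rw [hCdef, List.toFinset_card_of_nodup hq.support_nodup]
    have h2 := q.length_support
    have h3 : q.support.tail.length = q.length := by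
      rw [List.length_tail, h2]; omega
    omega
  have hlt : (Finset.univ : Finset (Fin k)).card < C.card := by
    rw [Finset.card_univ, Fintype.card_fin]
    omega
  obtain ⟨v, hvC, w, hwC, hvw, hfvw⟩ :=
    Finset.exists_ne_map_eq_of_card_lt_of_maps_to hlt (fun v _ => Finset.mem_univ (f v))
  have hvsup : v ∈ q.support := List.mem_of_mem_tail (List.mem_toFinset.mp hvC)
  have hwsup : w ∈ q.support := List.mem_of_mem_tail (List.mem_toFinset.mp hwC)
  have hPv1 := hfP v hvsup
  have hPw1 := hfP w hwsup
  rw [hfvw] at hPv1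
  rcases hPv1 with hv1 | ⟨hvn, b, hbD, hbe⟩ <;> rcases hPw1 with hw1 | ⟨hwn, b', hbD', hbe'⟩
  · exact hvw (Subtype.ext ((hv1.symm.trans hw1 : (v:V) = w)))
  · have hb'v : b' = v := Subtype.ext (hbe'.symm.trans hv1)
    exact hDnot w hwsup v hvsup (hb'v ▸ hbD')
  · have hbw : b = w := Subtype.ext (hbe.symm.trans hw1)
    exact hDnot v hvsup w hwsup (hbw ▸ hbD)
  · have hbb : b = b' := Subtype.ext (hbe.symm.trans hbe')
    exact claimDisj v hvsup w hwsup hvw b hbD (hbb ▸ hbD')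
end
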